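/- Let $D$ be a finite set, $p_0$ a strictly positive probability mass function, $c > 1$ with $c < \min_s 1/(1-p_0(s))$, and $\delta = \sqrt{c-1}(2\alpha-1)$ for some $\alpha \in [0,1]$. Define $\mathcal{M}(X) = \mathbb{E}_0[X] - \delta \mathbb{S}_0[X]$ on $\mathbb{R}^D$. Then $\mathcal{M}$ is strictly monotone: if $X_2 \geq X_1$ pointwise and $X_2(s) > X_1(s)$ for at least one $s \in D$, then $\mathcal{M}(X_2) > \mathcal{M}(X_1)$. -/

import Mathlib

/-- Expectation of `u` under the probability mass function `p`. -/
noncomputable def expct {D : Type*} [Fintype D] (p u : D → ℝ) : ℝ := ∑ s, p s * u s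

/-- Variance of `u` under the probability mass function `p`. -/
noncomputable def var0 {D : Type*} [Fintype D] (p u : D → ℝ) : ℝ :=
  ∑ s, p s * (u s - expct p u) ^ 2

/-- Standard deviation of `u` under the probability mass function `p`. -/
noncomputable def sdev {D : Type*} [Fintype D] (p u : D → ℝ) : ℝ :=
  Real.sqrt (var0 p u)

lemma expct_add {D : Type*} [Fintype D] (p u v : D → ℝ) :
    expct p (fun s => u s + v s) = expct p u + expct p v := by
  simp [expct, mul_add, Finset.sum_add_distrib]

lemma var0_nonneg {D : Type*} [Fintype D] (p : D → ℝ) (hp : ∀ s, 0 ≤ p s) (u : D → ℝ) :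
    0 ≤ var0 p u :=
  Finset.sum_nonneg fun s _ => mul_nonneg (hp s) (sq_nonneg _)

lemma sdev_nonneg {D : Type*} [Fintype D] (p u : D → ℝ) : 0 ≤ sdev p u := Real.sqrt_nonneg _

/-- weighted Cauchy–Schwarz -/
lemma weighted_cs {D : Type*} [Fintype D] (p : D → ℝ) (hp : ∀ s, 0 ≤ p s) (a b : D → ℝ) :
    ∑ s, p s * (a s * b s) ≤
      Real.sqrt (∑ s, p s * a s ^ 2) * Real.sqrt (∑ s, p s * b s ^ 2) := by
  have key := Finset.sum_mul_sq_le_sq_mul_sq Finset.univ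
      (fun s => Real.sqrt (p s) * a s) (fun s => Real.sqrt (p s) * b s)
  have h1 : ∀ s : D, (Real.sqrt (p s) * a s) * (Real.sqrt (p s) * b s) = p s * (a s * b s) := by
    intro s
    rw [mul_mul_mul_comm, Real.mul_self_sqrt (hp s)]
  have h2 : ∀ s : D, (Real.sqrt (p s) * a s) ^ 2 = p s * a s ^ 2 := by
    intro s; rw [mul_pow, Real.sq_sqrt (hp s)]
  have h3 : ∀ s : D, (Real.sqrt (p s) * b s) ^ 2 = p s * b s ^ 2 := by
    intro s; rw [mul_pow, Real.sq_sqrt (hp s)]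
  simp_rw [h1, h2, h3] at key
  calc ∑ s, p s * (a s * b s) ≤ |∑ s, p s * (a s * b s)| := le_abs_self _
    _ = Real.sqrt ((∑ s, p s * (a s * b s)) ^ 2) := (Real.sqrt_sq_eq_abs _).symm
    _ ≤ Real.sqrt ((∑ s, p s * a s ^ 2) * ∑ s, p s * b s ^ 2) := Real.sqrt_le_sqrt key
    _ = _ := Real.sqrt_mul (Finset.sum_nonneg fun s _ => mul_nonneg (hp s) (sq_nonneg _)) _

lemma sdev_add_le {D : Type*} [Fintype D] (p : D → ℝ) (hp : ∀ s, 0 ≤ p s) (u v : D → ℝ) :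
    sdev p (fun s => u s + v s) ≤ sdev p u + sdev p v := by
  set a : D → ℝ := fun s => u s - expct p u with ha
  set b : D → ℝ := fun s => v s - expct p v with hb
  have hA : var0 p u = ∑ s, p s * a s ^ 2 := rfl
  have hB : var0 p v = ∑ s, p s * b s ^ 2 := rfl
  have hvar : var0 p (fun s => u s + v s) = ∑ s, p s * (a s + b s) ^ 2 := by
    unfold var0
    rw [expct_add]
    congr 1; funext s; simp only [ha, hb]; ring
  have expand : ∑ s, p s * (a s + b s) ^ 2
      = (∑ s, p s * a s ^ 2) + 2 * (∑ s, p s * (a s * b s)) + ∑ s, p s * b s ^ 2 := by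
    have h : ∀ s : D, p s * (a s + b s) ^ 2
        = p s * a s ^ 2 + 2 * (p s * (a s * b s)) + p s * b s ^ 2 := fun s => by ring
    simp_rw [h, Finset.sum_add_distrib, Finset.mul_sum]
  have cs := weighted_cs p hp a b
  have hAn : 0 ≤ ∑ s, p s * a s ^ 2 :=
    Finset.sum_nonneg fun s _ => mul_nonneg (hp s) (sq_nonneg _)
  have hBn : 0 ≤ ∑ s, p s * b s ^ 2 :=
    Finset.sum_nonneg fun s _ => mul_nonneg (hp s) (sq_nonneg _)
  have hble : var0 p (fun s => u s + v s)
      ≤ (Real.sqrt (∑ s, p s * a s ^ 2) + Real.sqrt (∑ s, p s * b s ^ 2)) ^ 2 := by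
    rw [hvar, expand]
    have sq1 : Real.sqrt (∑ s, p s * a s ^ 2) ^ 2 = ∑ s, p s * a s ^ 2 := Real.sq_sqrt hAn
    have sq2 : Real.sqrt (∑ s, p s * b s ^ 2) ^ 2 = ∑ s, p s * b s ^ 2 := Real.sq_sqrt hBn
    nlinarith [cs]
  have := Real.sqrt_le_sqrt hble
  rw [Real.sqrt_sq (by positivity)] at this
  simpa [sdev, hA, hB] using this

lemma sdev_neg {D : Type*} [Fintype D] (p v : D → ℝ) :
    sdev p (fun s => -(v s)) = sdev p v := by
  have he : expct p (fun s => -(v s)) = -expct p v := by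
    simp [expct, Finset.sum_neg_distrib]
  unfold sdev var0
  rw [he]
  congr 1
  exact Finset.sum_congr rfl (fun s _ => by ring)

theorem stmt_9 {D : Type*} [Fintype D]
    (p0 : D → ℝ) (hpos : ∀ s, 0 < p0 s) (hsum : ∑ s, p0 s = 1)
    (c : ℝ) (hc1 : 1 < c) (hc : ∀ s, c < 1 / (1 - p0 s))
    (α : ℝ) (hα0 : 0 ≤ α) (hα1 : α ≤ 1)
    (δ : ℝ) (hδ : δ = Real.sqrt (c - 1) * (2 * α - 1)) :
    ∀ X1 X2 : D → ℝ, (∀ s, X1 s ≤ X2 s) → (∃ s, X1 s < X2 s) →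
      expct p0 X1 - δ * sdev p0 X1 < expct p0 X2 - δ * sdev p0 X2 := by
  intro X1 X2 hle ⟨s0, hs0⟩
  have hp : ∀ s, 0 ≤ p0 s := fun s => (hpos s).le
  set Y : D → ℝ := fun s => X2 s - X1 s with hY
  have hYnn : ∀ s, 0 ≤ Y s := fun s => sub_nonneg.mpr (hle s)
  set m : ℝ := expct p0 Y with hm
  have hmpos : 0 < m := by
    apply Finset.sum_pos' (fun s _ => mul_nonneg (hp s) (hYnn s))
    exact ⟨s0, Finset.mem_univ s0, mul_pos (hpos s0) (sub_pos.mpr hs0)⟩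
  -- key: c * m^2 > (c-1) * ∑ p Y^2
  have hcp : ∀ s, c - 1 < c * p0 s := by
    intro s
    have h1 : 1 - p0 s < 1 := by linarith [hpos s]
    rcases le_or_gt (1 - p0 s) 0 with h | h
    · nlinarith
    · have := (lt_div_iff₀ h).mp (hc s)
      nlinarith
  have hsingle : ∀ s, p0 s * Y s ≤ m := by
    intro s
    exact Finset.single_le_sum (f := fun s => p0 s * Y s)
      (fun i _ => mul_nonneg (hp i) (hYnn i)) (Finset.mem_univ s)
  have hkey : (c - 1) * ∑ s, p0 s * Y s ^ 2 < c * m ^ 2 := by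
    have hterm : ∀ s ∈ Finset.univ, (c - 1) * (p0 s * Y s ^ 2) ≤ p0 s * Y s * (c * m) := by
      intro s _
      rcases eq_or_lt_of_le (hYnn s) with h | h
      · rw [← h]; simp
      · have hpY : 0 < p0 s * Y s := mul_pos (hpos s) h
        have h4 : (c - 1) * Y s ≤ c * m := by
          calc (c - 1) * Y s ≤ c * p0 s * Y s :=
                le_of_lt (mul_lt_mul_of_pos_right (hcp s) h)
            _ = c * (p0 s * Y s) := by ring
            _ ≤ c * m := mul_le_mul_of_nonneg_left (hsingle s) (by linarith : (0:ℝ) ≤ c)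
        have h3 : (c - 1) * (p0 s * Y s ^ 2) = (p0 s * Y s) * ((c - 1) * Y s) := by ring
        rw [h3]
        calc (p0 s * Y s) * ((c - 1) * Y s) ≤ (p0 s * Y s) * (c * m) :=
              mul_le_mul_of_nonneg_left h4 hpY.le
          _ = p0 s * Y s * (c * m) := by ring
    have hstrict : (c - 1) * (p0 s0 * Y s0 ^ 2) < p0 s0 * Y s0 * (c * m) := by
      have h : 0 < Y s0 := sub_pos.mpr hs0
      have hpY : 0 < p0 s0 * Y s0 := mul_pos (hpos s0) h
      have h2 : (c - 1) * Y s0 < c * (p0 s0 * Y s0) := by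
        have := mul_lt_mul_of_pos_right (hcp s0) h
        linarith [this]
      have h1 : c * (p0 s0 * Y s0) ≤ c * m :=
        mul_le_mul_of_nonneg_left (hsingle s0) (by linarith : (0:ℝ) ≤ c)
      have h3 : (c - 1) * (p0 s0 * Y s0 ^ 2) = (p0 s0 * Y s0) * ((c - 1) * Y s0) := by ring
      rw [h3]
      calc (p0 s0 * Y s0) * ((c - 1) * Y s0) < (p0 s0 * Y s0) * (c * m) :=
            mul_lt_mul_of_pos_left (lt_of_lt_of_le h2 h1) hpY
        _ = p0 s0 * Y s0 * (c * m) := by ring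
    calc (c - 1) * ∑ s, p0 s * Y s ^ 2 = ∑ s, (c - 1) * (p0 s * Y s ^ 2) := by
            rw [Finset.mul_sum]
      _ < ∑ s, p0 s * Y s * (c * m) := by
            apply Finset.sum_lt_sum hterm ⟨s0, Finset.mem_univ s0, hstrict⟩
      _ = (∑ s, p0 s * Y s) * (c * m) := by rw [← Finset.sum_mul]
      _ = c * m ^ 2 := by
            have hmm : (∑ s, p0 s * Y s) = m := rfl
            rw [hmm]; ring
  -- var0 p0 Y = ∑ p Y^2 - m^2
  have hvarY : var0 p0 Y = (∑ s, p0 s * Y s ^ 2) - m ^ 2 := by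
    unfold var0
    rw [← hm]
    have : ∀ s : D, p0 s * (Y s - m) ^ 2 = p0 s * Y s ^ 2 - 2 * m * (p0 s * Y s) + m ^ 2 * p0 s := by
      intro s; ring
    simp_rw [this, Finset.sum_add_distrib, Finset.sum_sub_distrib, ← Finset.mul_sum]
    have hmm : (∑ s, p0 s * Y s) = m := rfl
    rw [hmm, hsum]
    ring
  have hvarlt : (c - 1) * var0 p0 Y < m ^ 2 := by
    rw [hvarY]; nlinarith
  -- √(c-1) * sdev Y < m
  have hsd : Real.sqrt (c - 1) * sdev p0 Y < m := by
    have h1 : Real.sqrt (c - 1) * sdev p0 Y = Real.sqrt ((c - 1) * var0 p0 Y) := by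
      rw [Real.sqrt_mul (by linarith : (0:ℝ) ≤ c - 1)]; rfl
    rw [h1]
    have h2 : Real.sqrt ((c - 1) * var0 p0 Y) < Real.sqrt (m ^ 2) :=
      Real.sqrt_lt_sqrt (mul_nonneg (by linarith) (var0_nonneg p0 hp Y)) hvarlt
    rwa [Real.sqrt_sq hmpos.le] at h2
  -- |δ| ≤ √(c-1)
  have hδabs : |δ| ≤ Real.sqrt (c - 1) := by
    rw [hδ, abs_mul, abs_of_nonneg (Real.sqrt_nonneg _)]
    have : |2 * α - 1| ≤ 1 := abs_le.mpr ⟨by linarith, by linarith⟩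
    nlinarith [Real.sqrt_nonneg (c - 1)]
  -- reverse triangle
  have htri : |sdev p0 X2 - sdev p0 X1| ≤ sdev p0 Y := by
    apply abs_le.mpr
    constructor
    · have h := sdev_add_le p0 hp X2 (fun s => -(Y s))
      have hfun : (fun s => X2 s + -(Y s)) = X1 := by funext s; simp [hY]
      rw [hfun, sdev_neg] at h
      linarith
    · have h := sdev_add_le p0 hp X1 Y
      have hfun : (fun s => X1 s + Y s) = X2 := by funext s; simp [hY]
      rw [hfun] at h
      linarith
  have hE : expct p0 X2 = expct p0 X1 + m := by
    have hmm : m = ∑ s, p0 s * (X2 s - X1 s) := rfl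
    rw [hmm]
    unfold expct
    rw [← Finset.sum_add_distrib]
    exact Finset.sum_congr rfl (fun s _ => by ring)
  have hfinal : δ * (sdev p0 X2 - sdev p0 X1) < m := by
    calc δ * (sdev p0 X2 - sdev p0 X1) ≤ |δ * (sdev p0 X2 - sdev p0 X1)| := le_abs_self _
      _ = |δ| * |sdev p0 X2 - sdev p0 X1| := abs_mul _ _
      _ ≤ Real.sqrt (c - 1) * sdev p0 Y := by
          apply mul_le_mul hδabs htri (abs_nonneg _) (Real.sqrt_nonneg _)
      _ < m := hsd
  rw [hE]; linarith
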